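/- Let μ, ν ∈ P(ℝ) and F a CDF, all symmetric (a distribution η is symmetric around its median m if F_η(x) + F_η(2m − x) = 1 for all continuity points x, equivalently Q_η(1/2+u) = 2m − Q_η(1/2−u)). Define A F = F_μ ∘ (φ ∗ (Q_ν ∘ (φ ∗ F))). If ν has compact support, then A F is symmetric and the median of A F equals the median of F. -/

import Mathlib

open MeasureTheory ProbabilityTheory Filter Topology

noncomputable def stdGauss (x : ℝ) : ℝ := Real.exp (-(x ^ 2) / 2) / Real.sqrt (2 * Real.pi)

noncomputable def quantile (ν : Measure ℝ) (u : ℝ) : ℝ :=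
  sInf {x : ℝ | u ≤ ProbabilityTheory.cdf ν x}

def IsCDF (F : ℝ → ℝ) : Prop :=
  Monotone F ∧ (∀ x, F x ∈ Set.Icc (0 : ℝ) 1) ∧
    Filter.Tendsto F Filter.atBot (nhds 0) ∧ Filter.Tendsto F Filter.atTop (nhds 1)

/-- The fixed-point operator `A F = F_μ ∘ (φ ∗ (Q_ν ∘ (φ ∗ F)))`. -/
noncomputable def opA (μ ν : Measure ℝ) (F : ℝ → ℝ) : ℝ → ℝ := fun x =>
  ProbabilityTheory.cdf μ (∫ y, quantile ν (∫ z, F (x - y - z) * stdGauss z) * stdGauss y)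

lemma stdGauss_eq : stdGauss = ProbabilityTheory.gaussianPDFReal 0 1 := by
  ext x
  simp [stdGauss, ProbabilityTheory.gaussianPDFReal, div_eq_mul_inv, mul_comm]

lemma stdGauss_pos (x : ℝ) : 0 < stdGauss x := by
  rw [stdGauss_eq]; exact ProbabilityTheory.gaussianPDFReal_pos 0 1 x one_ne_zero

lemma integrable_stdGauss : Integrable stdGauss := by
  rw [stdGauss_eq]; exact ProbabilityTheory.integrable_gaussianPDFReal 0 1

lemma integral_stdGauss : ∫ x, stdGauss x = 1 := by
  rw [stdGauss_eq]; exact ProbabilityTheory.integral_gaussianPDFReal_eq_one 0 one_ne_zero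

lemma stdGauss_neg (x : ℝ) : stdGauss (-x) = stdGauss x := by simp [stdGauss]

lemma measurable_stdGauss : Measurable stdGauss := by
  unfold stdGauss; fun_prop

/-- If `μ`, `ν` (compactly supported) and the CDF `F` are symmetric
(around `m₂`, `m₂` and `m₁` respectively), then `A F` is symmetric around `m₁`;
in particular the median of `A F` equals the median `m₁` of `F`. -/
theorem stmt_6 (μ ν : Measure ℝ) [IsProbabilityMeasure μ] [IsProbabilityMeasure ν]
    (K : Set ℝ) (hK : IsCompact K) (hνK : ν Kᶜ = 0)
    (F : ℝ → ℝ) (hF : IsCDF F) (m₁ m₂ : ℝ)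
    (hFsym : ∀ x, F x + F (2 * m₁ - x) = 1)
    (hμsym : ∀ x, ProbabilityTheory.cdf μ x + ProbabilityTheory.cdf μ (2 * m₂ - x) = 1)
    (hνsym : ∀ u ∈ Set.Ioo (0 : ℝ) 1, quantile ν u = 2 * m₂ - quantile ν (1 - u)) :
    (∀ x, opA μ ν F x + opA μ ν F (2 * m₁ - x) = 1) ∧ opA μ ν F m₁ = 1 / 2 := by
  obtain ⟨hFmono, hF01, _, _⟩ := hF
  have hFmeas : Measurable F := hFmono.measurable
  have hφnn : ∀ x, 0 ≤ stdGauss x := fun x => (stdGauss_pos x).le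
  -- F m₁ = 1/2
  have hFhalf : F m₁ = 1 / 2 := by
    have := hFsym m₁; have h2 : (2:ℝ) * m₁ - m₁ = m₁ := by ring
    rw [h2] at this; linarith
  -- integrability of bounded measurable times gaussian
  have hIntB : ∀ (G : ℝ → ℝ), Measurable G → (∀ t, |G t| ≤ 1) →
      Integrable (fun z => G z * stdGauss z) := by
    intro G hGm hGb
    refine integrable_stdGauss.mono' ((hGm.mul measurable_stdGauss).aestronglyMeasurable) ?_
    filter_upwards with z
    rw [Real.norm_eq_abs, abs_mul, abs_of_nonneg (hφnn z)]
    calc |G z| * stdGauss z ≤ 1 * stdGauss z :=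
      mul_le_mul_of_nonneg_right (hGb z) (hφnn z)
    _ = stdGauss z := one_mul _
  set g : ℝ → ℝ := fun w => ∫ z, F (w - z) * stdGauss z with hg_def
  have hFabs : ∀ t, |F t| ≤ 1 := fun t =>
    abs_le.2 ⟨by linarith [(hF01 t).1], (hF01 t).2⟩
  have hgInt : ∀ w : ℝ, Integrable (fun z => F (w - z) * stdGauss z) := fun w =>
    hIntB _ (hFmeas.comp (measurable_const.sub measurable_id)) (fun t => hFabs _)
  have hgInt' : ∀ w : ℝ, Integrable (fun z => F (w + z) * stdGauss z) := fun w =>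
    hIntB _ (hFmeas.comp (measurable_const.add measurable_id)) (fun t => hFabs _)
  -- symmetry of g
  have hgsym : ∀ w, g w + g (2 * m₁ - w) = 1 := by
    intro w
    have h1 : g (2 * m₁ - w) = ∫ z, F (2 * m₁ - w + z) * stdGauss z := by
      rw [hg_def]
      rw [← integral_neg_eq_self (fun z => F (2 * m₁ - w + z) * stdGauss z)]
      simp only [stdGauss_neg, ← sub_eq_add_neg]
    rw [h1, hg_def]
    rw [← integral_add (hgInt w) (hgInt' (2 * m₁ - w))]
    have : ∀ z : ℝ, F (w - z) * stdGauss z + F (2 * m₁ - w + z) * stdGauss z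
        = stdGauss z := by
      intro z
      have h3 := hFsym (w - z)
      have h2 : 2 * m₁ - (w - z) = 2 * m₁ - w + z := by ring
      rw [h2] at h3
      rw [← add_mul, h3, one_mul]
    simp_rw [this]
    exact integral_stdGauss
  -- monotonicity of g
  have hgmono : Monotone g := by
    intro a b hab
    exact integral_mono (hgInt a) (hgInt b)
      (fun z => mul_le_mul_of_nonneg_right (hFmono (by linarith)) (hφnn z))
  -- positivity of g
  have hgpos : ∀ w, 0 < g w := by
    intro w
    have hind : Integrable
        (Set.indicator (Set.Iic (w - m₁)) (fun z => (1/2) * stdGauss z)) :=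
      (integrable_stdGauss.const_mul _).indicator measurableSet_Iic
    have hle : ∀ z, Set.indicator (Set.Iic (w - m₁)) (fun z => (1/2) * stdGauss z) z
        ≤ F (w - z) * stdGauss z := by
      intro z
      by_cases hz : z ∈ Set.Iic (w - m₁)
      · rw [Set.indicator_of_mem hz]
        have : (1:ℝ)/2 ≤ F (w - z) := by
          rw [← hFhalf]
          refine hFmono ?_
          simp only [Set.mem_Iic] at hz
          linarith
        exact mul_le_mul_of_nonneg_right this (hφnn z)
      · rw [Set.indicator_of_notMem hz]
        exact mul_nonneg (hF01 _).1 (hφnn z)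
    have h1 : ∫ z, Set.indicator (Set.Iic (w - m₁)) (fun z => (1/2) * stdGauss z) z
        ≤ g w := integral_mono hind (hgInt w) hle
    have h2 : (0:ℝ) < ∫ z, Set.indicator (Set.Iic (w - m₁)) (fun z => (1/2) * stdGauss z) z := by
      rw [integral_indicator measurableSet_Iic]
      have h3 : (0:ℝ) < ∫ z in (w - m₁ - 1)..(w - m₁), (1/2) * stdGauss z := by
        refine intervalIntegral.intervalIntegral_pos_of_pos_on
          ((integrable_stdGauss.const_mul _).intervalIntegrable) ?_ (by linarith)
        intro z _
        exact mul_pos (by norm_num) (stdGauss_pos z)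
      have h4 : ∫ z in (w - m₁ - 1)..(w - m₁), (1/2) * stdGauss z
          = ∫ z in Set.Ioc (w - m₁ - 1) (w - m₁), (1/2) * stdGauss z :=
        intervalIntegral.integral_of_le (by linarith)
      have h5 : ∫ z in Set.Ioc (w - m₁ - 1) (w - m₁), (1/2) * stdGauss z
          ≤ ∫ z in Set.Iic (w - m₁), (1/2) * stdGauss z := by
        refine setIntegral_mono_set (integrable_stdGauss.const_mul _).integrableOn ?_ ?_
        · filter_upwards with z
          exact mul_nonneg (by norm_num) (hφnn z)
        · filter_upwards with z hz
          exact hz.2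
      linarith
    linarith
  have hglt1 : ∀ w, g w < 1 := by
    intro w
    have := hgsym w
    have := hgpos (2 * m₁ - w)
    linarith
  -- bound on support of ν
  obtain ⟨r, hKr⟩ := hK.isBounded.subset_closedBall 0
  rw [Real.closedBall_eq_Icc, zero_sub, zero_add] at hKr
  have hνK1 : ν K = 1 := by
    have := measure_add_measure_compl (μ := ν) hK.measurableSet
    rw [hνK, add_zero] at this
    rw [this]; exact measure_univ
  have hcdfR : ProbabilityTheory.cdf ν r = 1 := by
    rw [ProbabilityTheory.cdf_eq_real, measureReal_def]
    have h1 : ν (Set.Iic r) = 1 := by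
      refine le_antisymm prob_le_one ?_
      rw [← hνK1]
      exact measure_mono (fun x hx => (hKr hx).2)
    rw [h1]; simp
  have hcdf0 : ∀ x, x < -r → ProbabilityTheory.cdf ν x = 0 := by
    intro x hx
    rw [ProbabilityTheory.cdf_eq_real, measureReal_def]
    have h1 : ν (Set.Iic x) = 0 := by
      refine le_antisymm ?_ (zero_le)
      rw [← hνK]
      exact measure_mono (fun t ht => fun htK => by
        have := (hKr htK).1; simp only [Set.mem_Iic] at ht; linarith)
    rw [h1]; simp
  -- quantile facts
  have hSmem : ∀ u : ℝ, u ≤ 1 → r ∈ {x : ℝ | u ≤ ProbabilityTheory.cdf ν x} := by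
    intro u hu; simp only [Set.mem_setOf_eq, hcdfR]; exact hu
  have hSbd : ∀ u : ℝ, 0 < u → ∀ x ∈ {x : ℝ | u ≤ ProbabilityTheory.cdf ν x}, -r ≤ x := by
    intro u hu x hx
    by_contra h
    push_neg at h
    rw [Set.mem_setOf_eq, hcdf0 x h] at hx
    linarith
  have hQmem : ∀ u : ℝ, u ∈ Set.Ioo (0:ℝ) 1 → quantile ν u ∈ Set.Icc (-r) r := by
    intro u hu
    constructor
    · exact le_csInf ⟨r, hSmem u hu.2.le⟩ (hSbd u hu.1)
    · exact csInf_le ⟨-r, hSbd u hu.1⟩ (hSmem u hu.2.le)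
  have hQmono : ∀ u v : ℝ, u ∈ Set.Ioo (0:ℝ) 1 → v ∈ Set.Ioo (0:ℝ) 1 → u ≤ v →
      quantile ν u ≤ quantile ν v := by
    intro u v hu hv huv
    exact csInf_le_csInf ⟨-r, hSbd u hu.1⟩ ⟨r, hSmem v hv.2.le⟩
      (fun x hx => le_trans huv hx)
  set Qg : ℝ → ℝ := fun w => quantile ν (g w) with hQg_def
  have hgIoo : ∀ w, g w ∈ Set.Ioo (0:ℝ) 1 := fun w => ⟨hgpos w, hglt1 w⟩
  have hQgmono : Monotone Qg := fun a b hab =>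
    hQmono _ _ (hgIoo a) (hgIoo b) (hgmono hab)
  have hQgbd : ∀ w, |Qg w| ≤ r := by
    intro w
    have := hQmem (g w) (hgIoo w)
    exact abs_le.2 ⟨this.1, this.2⟩
  have hQgsym : ∀ w, Qg (2 * m₁ - w) = 2 * m₂ - Qg w := by
    intro w
    have h1 : g (2 * m₁ - w) = 1 - g w := by linarith [hgsym w]
    have h2 := hνsym (g w) (hgIoo w)
    show quantile ν (g (2 * m₁ - w)) = 2 * m₂ - quantile ν (g w)
    rw [h1]
    linarith [h2]
  -- the middle integral H
  set H : ℝ → ℝ := fun x => ∫ y, Qg (x - y) * stdGauss y with hH_def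
  have hr0 : 0 ≤ r := le_trans (abs_nonneg _) (hQgbd 0)
  have hHint : ∀ x, Integrable (fun y => Qg (x - y) * stdGauss y) := by
    intro x
    refine (integrable_stdGauss.const_mul r).mono'
      (((hQgmono.measurable.comp (measurable_const.sub measurable_id)).mul
        measurable_stdGauss).aestronglyMeasurable) ?_
    filter_upwards with y
    rw [Real.norm_eq_abs, abs_mul, abs_of_nonneg (hφnn y)]
    exact mul_le_mul_of_nonneg_right (hQgbd _) (hφnn y)
  have hHsym : ∀ x, H (2 * m₁ - x) = 2 * m₂ - H x := by
    intro x
    have h1 : H (2 * m₁ - x) = ∫ y, Qg (2 * m₁ - (x - y)) * stdGauss y := by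
      rw [hH_def]
      rw [← integral_neg_eq_self (fun y => Qg (2 * m₁ - (x - y)) * stdGauss y)]
      simp only [stdGauss_neg, sub_neg_eq_add]
      congr 1; ext y; ring_nf
    rw [h1]
    have h2 : ∀ y : ℝ, Qg (2 * m₁ - (x - y)) * stdGauss y
        = 2 * m₂ * stdGauss y - Qg (x - y) * stdGauss y := by
      intro y; rw [hQgsym (x - y)]; ring
    simp_rw [h2]
    rw [integral_sub (integrable_stdGauss.const_mul (2 * m₂)) (hHint x)]
    rw [integral_const_mul, integral_stdGauss, mul_one]
  have hopA : ∀ x, opA μ ν F x = ProbabilityTheory.cdf μ (H x) := fun x => rfl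
  have main : ∀ x, opA μ ν F x + opA μ ν F (2 * m₁ - x) = 1 := by
    intro x
    rw [hopA, hopA, hHsym x]
    exact hμsym (H x)
  refine ⟨main, ?_⟩
  have h := main m₁
  rw [show (2:ℝ) * m₁ - m₁ = m₁ by ring] at h
  linarith
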